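/- For every connected graph G = (V,E) and every graph G' = (V,E') with E ⊆ E', the convex hull in ℝ^{E'} of the characteristic vectors of those multicuts of G' that are lifted from G is a polytope of dimension |E'|. -/

import Mathlib

open SimpleGraph

variable {V : Type}

section Defs

variable [Fintype V] [DecidableEq V]

/-- A decomposition of a graph `G`: a partition of the vertex set into
blocks each of which induces a connected subgraph of `G`. -/
def IsDecomposition (G : SimpleGraph V) (P : Set (Set V)) : Prop :=
  (∀ U ∈ P, ∀ W ∈ P, U ≠ W → Disjoint U W) ∧
  (∀ v : V, ∃ U ∈ P, v ∈ U) ∧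
  (∀ U ∈ P, (G.induce U).Connected)

/-- An edge `e` straddles distinct blocks of `P` if no block contains both endpoints. -/
def Straddles (P : Set (Set V)) (e : Sym2 V) : Prop := ∀ U ∈ P, ¬ ∀ v ∈ e, v ∈ U

/-- The set of edges of `G` straddling distinct blocks of `P` (the map `φ_G`). -/
def cutEdges (G : SimpleGraph V) (P : Set (Set V)) : Set (Sym2 V) :=
  {e | e ∈ G.edgeSet ∧ Straddles P e}

/-- A multicut of `G`: a set of edges meeting every cycle of `G` in a number of
edges different from 1. -/
def IsMulticut (G : SimpleGraph V) (M : Set (Sym2 V)) : Prop :=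
  M ⊆ G.edgeSet ∧ ∀ ⦃u : V⦄ (c : G.Walk u u), c.IsCycle →
    (M ∩ {e | e ∈ c.edges}).ncard ≠ 1

/-- A multicut of `G'` lifted from `G`. -/
def IsLiftedMulticut (G G' : SimpleGraph V) (M : Set (Sym2 V)) : Prop :=
  ∃ P : Set (Set V), IsDecomposition G P ∧ M = cutEdges G' P

/-- The closed walk `c` has a chord in the graph `H`: an edge of `H` joining two
vertices of `c` that is not an edge of `c`. -/
def HasChord (H : SimpleGraph V) {G : SimpleGraph V} {u : V} (c : G.Walk u u) : Prop :=
  ∃ e ∈ H.edgeSet, (∀ v ∈ e, v ∈ c.support) ∧ e ∉ c.edges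

/-- A `vw`-cut of `G`: a minimal set of edges whose removal disconnects `v` from `w`. -/
def IsCut (G : SimpleGraph V) (v w : V) (C : Finset (Sym2 V)) : Prop :=
  ↑C ⊆ G.edgeSet ∧ ¬ (G.deleteEdges ↑C).Reachable v w ∧
    ∀ C' : Finset (Sym2 V), C' ⊂ C → (G.deleteEdges ↑C').Reachable v w

/-- The cycle inequalities for cycles of `G`. -/
def CycleIneqs (G : SimpleGraph V) (x : Sym2 V → ℕ) : Prop :=
  ∀ ⦃u : V⦄ (c : G.Walk u u), c.IsCycle → ∀ e ∈ c.edges,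
    x e ≤ ∑ e' ∈ c.edges.toFinset.erase e, x e'

/-- The path inequalities for pairs `vw ∈ E' \ E` and `vw`-paths of `G`. -/
def PathIneqs (G G' : SimpleGraph V) (x : Sym2 V → ℕ) : Prop :=
  ∀ v w : V, s(v, w) ∈ G'.edgeSet \ G.edgeSet →
    ∀ p : G.Walk v w, p.IsPath → x s(v, w) ≤ ∑ e ∈ p.edges.toFinset, x e

/-- The cut inequalities for pairs `vw ∈ E' \ E` and `vw`-cuts of `G`. -/
def CutIneqs (G G' : SimpleGraph V) (x : Sym2 V → ℕ) : Prop :=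
  ∀ v w : V, s(v, w) ∈ G'.edgeSet \ G.edgeSet →
    ∀ C : Finset (Sym2 V), IsCut G v w C → 1 - x s(v, w) ≤ ∑ e ∈ C, (1 - x e)

/-- Characteristic vector of an edge set, in `ℝ^{Sym2 V}`. -/
noncomputable def charVec (M : Set (Sym2 V)) : Sym2 V → ℝ :=
  fun e => by classical exact if e ∈ M then 1 else 0

/-- The characteristic vectors of multicuts of `G'` lifted from `G`
(the vertex set of the lifted multicut polytope `Ξ_{GG'}`). -/
def liftedVectors (G G' : SimpleGraph V) : Set (Sym2 V → ℝ) :=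
  {x | ∃ M : Set (Sym2 V), IsLiftedMulticut G G' M ∧ x = charVec M}

/-- The characteristic vectors of multicuts of `G'`. -/
def multicutVectors (G' : SimpleGraph V) : Set (Sym2 V → ℝ) :=
  {x | ∃ M : Set (Sym2 V), IsMulticut G' M ∧ x = charVec M}

/-- The inequality `ineq`, with associated equality `eqn`, defines a facet of the
lifted multicut polytope `Ξ_{GG'}` (which has dimension `|E'|`): it is valid, and
the face it induces has dimension `|E'| - 1`. -/
def DefinesFacet (G G' : SimpleGraph V) (ineq eqn : (Sym2 V → ℝ) → Prop) : Prop :=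
  (∀ x ∈ liftedVectors G G', ineq x) ∧
  Module.finrank ℝ (vectorSpan ℝ {x ∈ liftedVectors G G' | eqn x}) = G'.edgeSet.ncard - 1

/-- Facet-defining for the multicut polytope `Ξ_{G'}`. -/
def DefinesFacetMC (G' : SimpleGraph V) (ineq eqn : (Sym2 V → ℝ) → Prop) : Prop :=
  (∀ x ∈ multicutVectors G', ineq x) ∧
  Module.finrank ℝ (vectorSpan ℝ {x ∈ multicutVectors G' | eqn x}) = G'.edgeSet.ncard - 1

/-- `u` is a `v`-`w`-cut-vertex: it lies on every `vw`-path of `G`. -/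
def IsCutVertex (G : SimpleGraph V) (v w u : V) : Prop :=
  ∀ p : G.Walk v w, p.IsPath → u ∈ p.support

/-- `S` is a `u`-`v`-separating node set of `G`. -/
def IsSeparatingSet (G : SimpleGraph V) (u v : V) (S : Set V) : Prop :=
  u ∉ S ∧ v ∉ S ∧ ∀ p : G.Walk u v, p.IsPath → ∃ s ∈ S, s ∈ p.support

/-- The side of the cut `C` containing `v`. -/
def vSide (G : SimpleGraph V) (C : Finset (Sym2 V)) (v : V) : Set V :=
  {u | (G.deleteEdges ↑C).Reachable v u}

/-- The component of `G` induced by `U` is properly `(vw,C)`-connected. -/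
def ProperlyConnected (G : SimpleGraph V) (v w : V) (C : Finset (Sym2 V)) (U : Set V) : Prop :=
  (G.induce U).Connected ∧ v ∈ U ∧ w ∈ U ∧
    ({e | e ∈ C ∧ ∀ u ∈ e, u ∈ U} : Set (Sym2 V)).ncard = 1

/-- The component of `G` induced by `U` is improperly `(vw,C)`-connected. -/
def ImproperlyConnected (G : SimpleGraph V) (v w : V) (C : Finset (Sym2 V)) (U : Set V) : Prop :=
  (G.induce U).Connected ∧ (U ⊆ vSide G C v ∨ U ⊆ vSide G C w)

/-- `(vw,C)`-connected: properly or improperly so. -/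
def VWCConnected (G : SimpleGraph V) (v w : V) (C : Finset (Sym2 V)) (U : Set V) : Prop :=
  ProperlyConnected G v w C U ∨ ImproperlyConnected G v w C U

/-- The vertex set of the maximal component of `H` containing `u`. -/
def compSupp (H : SimpleGraph V) (u : V) : Set V := {u' | H.Reachable u u'}

end Defs
set_option linter.unusedSectionVars false

section Proof
variable [Fintype V] [DecidableEq V]

lemma forall_mem_sym2 {x y : V} {U : Set V} : (∀ v ∈ s(x,y), v ∈ U) ↔ x ∈ U ∧ y ∈ U := by
  constructor
  · intro h; exact ⟨h x (by simp), h y (by simp)⟩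
  · rintro ⟨hx, hy⟩ v hv; rcases Sym2.mem_iff.mp hv with rfl | rfl <;> assumption

/-- Blocks of the partition: `S` together with singletons outside `S`. -/
def blocks (S : Set V) : Set (Set V) := insert S {T | ∃ u ∉ S, T = {u}}

lemma induce_singleton_connected (G : SimpleGraph V) (u : V) : (G.induce {u}).Connected := by
  haveI : Nonempty ↥({u} : Set V) := ⟨⟨u, rfl⟩⟩
  refine ⟨?_⟩
  intro a b
  have : a = b := Subtype.ext (a.2.trans b.2.symm)
  exact this ▸ Reachable.refl a

lemma blocks_decomp {G : SimpleGraph V} {S : Set V} (hconn : (G.induce S).Connected) :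
    IsDecomposition G (blocks S) := by
  refine ⟨?_, ?_, ?_⟩
  · rintro U hU W hW hUW
    rcases hU with rfl | ⟨u, hu, rfl⟩ <;> rcases hW with rfl | ⟨u', hu', rfl⟩
    · exact absurd rfl hUW
    · exact Set.disjoint_singleton_right.mpr hu'
    · exact Set.disjoint_singleton_left.mpr hu
    · exact Set.disjoint_singleton.mpr (fun h => hUW (by rw [h]))
  · intro v
    by_cases hv : v ∈ S
    · exact ⟨S, Set.mem_insert _ _, hv⟩
    · exact ⟨{v}, Set.mem_insert_iff.mpr (Or.inr ⟨v, hv, rfl⟩), rfl⟩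
  · rintro U (rfl | ⟨u, hu, rfl⟩)
    · exact hconn
    · exact induce_singleton_connected G u

lemma cutEdges_blocks (G' : SimpleGraph V) (S : Set V) :
    cutEdges G' (blocks S) = {f ∈ G'.edgeSet | ¬ ∀ u ∈ f, u ∈ S} := by
  ext f
  induction f using Sym2.ind with
  | _ x y =>
    simp only [cutEdges, Set.mem_setOf_eq]
    constructor
    · rintro ⟨he, hst⟩
      exact ⟨he, hst S (Set.mem_insert _ _)⟩
    · rintro ⟨he, hns⟩
      refine ⟨he, ?_⟩
      rintro U (rfl | ⟨u, hu, rfl⟩)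
      · exact hns
      · rw [forall_mem_sym2]
        rintro ⟨hx, hy⟩
        exact ((G'.mem_edgeSet).mp he).ne (by
          simp only [Set.mem_singleton_iff] at hx hy; rw [hx, hy])

lemma blocks_mem_lifted {G G' : SimpleGraph V} {S : Set V} (hconn : (G.induce S).Connected) :
    charVec (cutEdges G' (blocks S)) ∈ liftedVectors G G' :=
  ⟨_, ⟨blocks S, blocks_decomp hconn, rfl⟩, rfl⟩

lemma cutEdges_blocks_singleton (G' : SimpleGraph V) (v : V) :
    cutEdges G' (blocks ({v} : Set V)) = G'.edgeSet := by
  rw [cutEdges_blocks]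
  ext f
  induction f using Sym2.ind with
  | _ x y =>
    simp only [Set.mem_setOf_eq, and_iff_left_iff_imp]
    intro he hall
    rw [forall_mem_sym2] at hall
    exact ((G'.mem_edgeSet).mp he).ne (by
      simp only [Set.mem_singleton_iff] at hall; rw [hall.1, hall.2])

lemma charVec_sub (G' : SimpleGraph V) (S : Set V) :
    charVec (G'.edgeSet) - charVec {f ∈ G'.edgeSet | ¬ ∀ u ∈ f, u ∈ S}
      = charVec {f ∈ G'.edgeSet | ∀ u ∈ f, u ∈ S} := by
  classical
  funext e
  simp only [charVec, Pi.sub_apply, Set.mem_setOf_eq]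
  by_cases h1 : e ∈ G'.edgeSet <;> by_cases h2 : ∀ u ∈ e, u ∈ S
  · rw [if_pos h1, if_neg (show ¬(e ∈ G'.edgeSet ∧ ¬∀ u ∈ e, u ∈ S) from fun hc => hc.2 h2),
      if_pos ⟨h1, h2⟩]
    norm_num
  · rw [if_pos h1, if_pos ⟨h1, h2⟩,
      if_neg (show ¬(e ∈ G'.edgeSet ∧ ∀ u ∈ e, u ∈ S) from fun hc => h2 hc.2)]
    norm_num
  · rw [if_neg h1, if_neg (show ¬(e ∈ G'.edgeSet ∧ ¬∀ u ∈ e, u ∈ S) from fun hc => h1 hc.1),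
      if_neg (show ¬(e ∈ G'.edgeSet ∧ ∀ u ∈ e, u ∈ S) from fun hc => h1 hc.1)]
    norm_num
  · rw [if_neg h1, if_neg (show ¬(e ∈ G'.edgeSet ∧ ¬∀ u ∈ e, u ∈ S) from fun hc => h1 hc.1),
      if_neg (show ¬(e ∈ G'.edgeSet ∧ ∀ u ∈ e, u ∈ S) from fun hc => h1 hc.1)]
    norm_num

lemma charVec_eq_sum (M : Set (Sym2 V)) :
    charVec M = ∑ f ∈ M.toFinite.toFinset, Pi.single f (1:ℝ) := by
  classical
  funext e
  rw [Finset.sum_apply]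
  simp only [Pi.single_apply, charVec]
  rw [Finset.sum_ite_eq]
  simp only [Set.Finite.mem_toFinset]

lemma dist_take_drop {G : SimpleGraph V} (hG : G.Connected) {v w : V} (p : G.Walk v w)
    (hp : p.length = G.dist v w) {a : V} (ha : a ∈ p.support) :
    G.dist v a = (p.takeUntil a ha).length ∧ G.dist a w = (p.dropUntil a ha).length := by
  have h1 : G.dist v a ≤ (p.takeUntil a ha).length := SimpleGraph.dist_le _
  have h2 : G.dist a w ≤ (p.dropUntil a ha).length := SimpleGraph.dist_le _
  have hlen : (p.takeUntil a ha).length + (p.dropUntil a ha).length = p.length := by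
    rw [← SimpleGraph.Walk.length_append, p.take_spec ha]
  have htri : G.dist v w ≤ G.dist v a + G.dist a w := hG.dist_triangle
  omega

lemma dist_lt_of_mem_support {G : SimpleGraph V} (hG : G.Connected) {v w : V} (p : G.Walk v w)
    (hp : p.length = G.dist v w) {a b : V} (ha : a ∈ p.support) (hb : b ∈ p.support)
    (hne : s(a,b) ≠ s(v,w)) (hab : a ≠ b) : G.dist a b < G.dist v w := by
  obtain ⟨h1, h2⟩ := dist_take_drop hG p hp ha
  have hsum : G.dist v a + G.dist a w = G.dist v w := by
    rw [h1, h2, ← SimpleGraph.Walk.length_append, p.take_spec ha, hp]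
  rw [← p.take_spec ha, SimpleGraph.Walk.mem_support_append_iff] at hb
  rcases hb with hb | hb
  · -- b on the takeUntil part: walk v → a
    obtain ⟨g1, g2⟩ := dist_take_drop hG (p.takeUntil a ha) h1.symm hb
    have hsum2 : G.dist v b + G.dist b a = G.dist v a := by
      rw [g1, g2, ← SimpleGraph.Walk.length_append,
        (p.takeUntil a ha).take_spec hb, h1]
    have hcomm : G.dist a b = G.dist b a := SimpleGraph.dist_comm
    by_contra hlt
    push_neg at hlt
    have hva : G.dist v b = 0 ∧ G.dist a w = 0 := by omega
    have hbv : b = v := ((hG.dist_eq_zero_iff).mp hva.1).symm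
    have haw : a = w := (hG.dist_eq_zero_iff).mp hva.2
    exact hne (by rw [hbv, haw, Sym2.eq_swap])
  · -- b on the dropUntil part: walk a → w
    obtain ⟨g1, g2⟩ := dist_take_drop hG (p.dropUntil a ha) h2.symm hb
    have hsum2 : G.dist a b + G.dist b w = G.dist a w := by
      rw [g1, g2, ← SimpleGraph.Walk.length_append,
        (p.dropUntil a ha).take_spec hb, h2]
    by_contra hlt
    push_neg at hlt
    have hz : G.dist v a = 0 ∧ G.dist b w = 0 := by omega
    have hav : a = v := ((hG.dist_eq_zero_iff).mp hz.1).symm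
    have hbw : b = w := (hG.dist_eq_zero_iff).mp hz.2
    exact hne (by rw [hav, hbw])

end Proof

/-- For connected `G` and `G' ⊇ G`, the lifted multicut polytope
`Ξ_{GG'}` (convex hull of the characteristic vectors of multicuts of `G'` lifted
from `G`) has dimension `|E'|`. -/
theorem lifted_multicut_polytope_dimension [Fintype V] [DecidableEq V]
    (G G' : SimpleGraph V) (hG : G.Connected) (hle : G ≤ G') :
    Module.finrank ℝ (vectorSpan ℝ (convexHull ℝ (liftedVectors G G'))) =
      G'.edgeSet.ncard := by
  classical
  have hspan : vectorSpan ℝ (convexHull ℝ (liftedVectors G G')) =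
      vectorSpan ℝ (liftedVectors G G') := by
    rw [← direction_affineSpan, ← direction_affineSpan, affineSpan_convexHull]
  rw [hspan]
  set t : Set (Sym2 V → ℝ) := (fun e => Pi.single e (1:ℝ)) '' G'.edgeSet with ht
  have hmem : ∀ M : Set (Sym2 V), M ⊆ G'.edgeSet → charVec M ∈ Submodule.span ℝ t := by
    intro M hM
    rw [charVec_eq_sum]
    refine Submodule.sum_mem _ (fun f hf => ?_)
    exact Submodule.subset_span ⟨f, hM (M.toFinite.mem_toFinset.mp hf), rfl⟩
  have hupper : vectorSpan ℝ (liftedVectors G G') ≤ Submodule.span ℝ t := by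
    rw [vectorSpan_def, Submodule.span_le]
    rintro x hx
    rw [Set.mem_vsub] at hx
    obtain ⟨a, ha, b, hb, rfl⟩ := hx
    obtain ⟨M1, ⟨P1, _, rfl⟩, rfl⟩ := ha
    obtain ⟨M2, ⟨P2, _, rfl⟩, rfl⟩ := hb
    rw [vsub_eq_sub]
    exact Submodule.sub_mem _ (hmem _ (fun f hf => hf.1)) (hmem _ (fun f hf => hf.1))
  have key : ∀ n : ℕ, ∀ v w : V, s(v,w) ∈ G'.edgeSet → G.dist v w = n →
      Pi.single (s(v,w)) (1:ℝ) ∈ vectorSpan ℝ (liftedVectors G G') := by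
    intro n
    induction n using Nat.strong_induction_on with
    | _ n IH =>
      intro v w he hd
      obtain ⟨p, hp⟩ := hG.exists_walk_length_eq_dist v w
      set S : Set V := {u | u ∈ p.support} with hS
      have hconnS : (G.induce S).Connected := by
        have h2 := p.toSubgraph_connected.induce_verts
        rwa [p.verts_toSubgraph] at h2
      set F : Set (Sym2 V) := {f ∈ G'.edgeSet | ∀ u ∈ f, u ∈ S} with hF
      have hdiff : charVec F ∈ vectorSpan ℝ (liftedVectors G G') := by
        have hm1 : charVec (G'.edgeSet) ∈ liftedVectors G G' := by
          have h := blocks_mem_lifted (G' := G') (induce_singleton_connected G v)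
          rwa [cutEdges_blocks_singleton] at h
        have hm2 : charVec (cutEdges G' (blocks S)) ∈ liftedVectors G G' :=
          blocks_mem_lifted hconnS
        have hvs := vsub_mem_vectorSpan ℝ hm1 hm2
        rw [vsub_eq_sub, cutEdges_blocks, charVec_sub] at hvs
        exact hvs
      have heF : s(v,w) ∈ F := ⟨he, by
        rw [forall_mem_sym2]
        exact ⟨p.start_mem_support, p.end_mem_support⟩⟩
      have hother : ∀ f ∈ F.toFinite.toFinset.erase (s(v,w)),
          Pi.single f (1:ℝ) ∈ vectorSpan ℝ (liftedVectors G G') := by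
        intro f
        induction f using Sym2.ind with
        | _ a b =>
          intro hf
          obtain ⟨hne, hfF⟩ := Finset.mem_erase.mp hf
          rw [Set.Finite.mem_toFinset] at hfF
          obtain ⟨hfe, hab⟩ := hfF
          rw [forall_mem_sym2] at hab
          have habne : a ≠ b := ((G'.mem_edgeSet).mp hfe).ne
          have hlt : G.dist a b < G.dist v w :=
            dist_lt_of_mem_support hG p hp hab.1 hab.2 hne habne
          rw [hd] at hlt
          exact IH (G.dist a b) hlt a b hfe rfl
      have hsum : charVec F = Pi.single (s(v,w)) (1:ℝ)
          + ∑ f ∈ F.toFinite.toFinset.erase (s(v,w)), Pi.single f (1:ℝ) := by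
        rw [charVec_eq_sum, ← Finset.add_sum_erase _ _ (F.toFinite.mem_toFinset.mpr heF)]
      have hfin := Submodule.sub_mem _ hdiff
        (Submodule.sum_mem _ (fun f hf => hother f hf))
      rwa [hsum, add_sub_cancel_right] at hfin
  have hlower : Submodule.span ℝ t ≤ vectorSpan ℝ (liftedVectors G G') := by
    rw [Submodule.span_le]
    rintro x ⟨e, he, rfl⟩
    induction e using Sym2.ind with
    | _ v w => exact key (G.dist v w) v w he rfl
  rw [le_antisymm hupper hlower]
  haveI : Fintype t := (G'.edgeSet.toFinite.image _).fintype
  have hinj : Function.Injective (fun e : Sym2 V => Pi.single e (1:ℝ)) := by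
    intro a b h
    by_contra hne
    have hc := congrFun h a
    simp only [Pi.single_eq_same, Pi.single_eq_of_ne hne] at hc
    norm_num at hc
  have hli : LinearIndependent ℝ ((↑) : t → (Sym2 V → ℝ)) := by
    refine LinearIndepOn.id_image (v := fun e : Sym2 V => Pi.single e (1:ℝ)) (s := G'.edgeSet) ?_
    unfold LinearIndepOn
    have hb := (Pi.basisFun ℝ (Sym2 V)).linearIndependent
    have hcomp := hb.comp ((↑) : G'.edgeSet → Sym2 V) Subtype.coe_injective
    convert hcomp using 1
    funext i
    simp [Function.comp, Pi.basisFun_apply]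
  rw [finrank_span_set_eq_card hli, ← Set.ncard_eq_toFinset_card', ht,
    Set.ncard_image_of_injective _ hinj]
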